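/- arXiv:quant-ph/9805080 — 2 statements merged into one kernel-verified Lean document; each statement's English description precedes it below -/
import Mathlib

section
/- For every ε > 0 and δ > 0 there exists N₀ such that for all N ≥ N₀, the real part of trace(ρ⊗N * Π) is at least 1 − ε, where Π is the orthogonal projector onto the typical subspace spanned by those tensor products of eigenvectors whose total codeword length is at most N(L̄ + δ); precisely, with M_N : Matrix (Fin N → Fin d) (Fin N → Fin d) ℂ given by M_N x y = ∏ j, ρ (x j) (y j) and Π a b = ∑ over x : Fin N → Fin d with (∑ j, (l (x j) : ℝ)) ≤ N * (L̄ + δ) of ∏ j, (v (x j) (a j)) * conj (v (x j) (b j)), one has (trace (M_N * Π)).re ≥ 1 − ε. -/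
open scoped ComplexConjugate ComplexOrder
open Finset

/-- Factorization of a sum of products over a function type. -/
lemma qh_sumfact {α : Type*} [CommSemiring α] {N d : ℕ} (f : Fin N → Fin d → α) :
    ∑ x : Fin N → Fin d, ∏ j, f j (x j) = ∏ j, ∑ i, f j i :=
  (Fintype.prod_sum f).symm

/-- Expectation of the eigenprojector of `v k` against `ρ` is `p k`. -/
lemma qh_key {d : ℕ} (ρ : Matrix (Fin d) (Fin d) ℂ) (p : Fin d → ℝ) (v : Fin d → Fin d → ℂ)
    (hortho : ∀ i i' : Fin d, ∑ a, v i a * conj (v i' a) = if i = i' then 1 else 0)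
    (hdiag : ∀ a b : Fin d, ρ a b = ∑ i, (p i : ℂ) * v i a * conj (v i b))
    (k : Fin d) : ∑ e, ∑ c, ρ e c * (v k c * conj (v k e)) = (p k : ℂ) := by
  calc ∑ e, ∑ c, ρ e c * (v k c * conj (v k e))
      = ∑ i, ∑ e, ∑ c, ((p i : ℂ) * v i e * conj (v i c)) * (v k c * conj (v k e)) := by
        simp only [hdiag, sum_mul]
        rw [show (∑ e, ∑ c, ∑ i, ((p i : ℂ) * v i e * conj (v i c)) * (v k c * conj (v k e)))
            = ∑ e, ∑ i, ∑ c, ((p i : ℂ) * v i e * conj (v i c)) * (v k c * conj (v k e)) from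
          Finset.sum_congr rfl fun e _ => Finset.sum_comm]
        exact Finset.sum_comm
    _ = ∑ i, (p i : ℂ) * ((∑ e, v i e * conj (v k e)) * (∑ c, v k c * conj (v i c))) := by
        refine Finset.sum_congr rfl fun i _ => ?_
        rw [Finset.sum_mul_sum, Finset.mul_sum]
        refine Finset.sum_congr rfl fun e _ => ?_
        rw [Finset.mul_sum]
        exact Finset.sum_congr rfl fun c _ => by ring
    _ = (p k : ℂ) := by
        simp only [hortho]
        simp

/-- Trace of the `N`-fold tensor power against a partial projector. -/
lemma qh_trace {d N : ℕ} (ρ : Matrix (Fin d) (Fin d) ℂ)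
    (p : Fin d → ℝ) (v : Fin d → Fin d → ℂ)
    (key : ∀ k : Fin d, ∑ e, ∑ c, ρ e c * (v k c * conj (v k e)) = (p k : ℂ))
    (T : Finset (Fin N → Fin d)) :
    (Matrix.trace
          ((Matrix.of fun x y : Fin N → Fin d => ∏ j, ρ (x j) (y j)) *
           (Matrix.of fun a b : Fin N → Fin d =>
              ∑ x ∈ T, ∏ j, v (x j) (a j) * conj (v (x j) (b j)))))
    = ∑ x ∈ T, ∏ j, (p (x j) : ℂ) := by
  rw [Matrix.trace]
  simp only [Matrix.diag, Matrix.mul_apply, Matrix.of_apply]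
  calc ∑ a : Fin N → Fin d, ∑ b : Fin N → Fin d,
        (∏ j, ρ (a j) (b j)) * ∑ x ∈ T, ∏ j, v (x j) (b j) * conj (v (x j) (a j))
      = ∑ x ∈ T, ∑ a : Fin N → Fin d, ∑ b : Fin N → Fin d,
          ∏ j, ρ (a j) (b j) * (v (x j) (b j) * conj (v (x j) (a j))) := by
        simp only [Finset.mul_sum]
        rw [show (∑ a : Fin N → Fin d, ∑ b : Fin N → Fin d, ∑ x ∈ T,
              (∏ j, ρ (a j) (b j)) * ∏ j, v (x j) (b j) * conj (v (x j) (a j)))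
            = ∑ a : Fin N → Fin d, ∑ x ∈ T, ∑ b : Fin N → Fin d,
              (∏ j, ρ (a j) (b j)) * ∏ j, v (x j) (b j) * conj (v (x j) (a j)) from
          Finset.sum_congr rfl fun a _ => Finset.sum_comm]
        rw [Finset.sum_comm]
        refine Finset.sum_congr rfl fun x _ => Finset.sum_congr rfl fun a _ =>
          Finset.sum_congr rfl fun b _ => ?_
        rw [← Finset.prod_mul_distrib]
      _ = ∑ x ∈ T, ∏ j, (p (x j) : ℂ) := by
        refine Finset.sum_congr rfl fun x _ => ?_
        have h1 : ∀ a : Fin N → Fin d, (∑ b : Fin N → Fin d,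
            ∏ j, ρ (a j) (b j) * (v (x j) (b j) * conj (v (x j) (a j))))
            = ∏ j, ∑ c, ρ (a j) c * (v (x j) c * conj (v (x j) (a j))) :=
          fun a => qh_sumfact (fun j c => ρ (a j) c * (v (x j) c * conj (v (x j) (a j))))
        simp only [h1]
        rw [qh_sumfact (fun j e => ∑ c, ρ e c * (v (x j) c * conj (v (x j) e)))]
        exact Finset.prod_congr rfl fun j _ => key (x j)

/-- Second-moment (variance) identity for i.i.d. centered variables. -/
lemma qh_moment2 {d N : ℕ} (p g : Fin d → ℝ) (hp1 : ∑ i, p i = 1)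
    (hg0 : ∑ i, p i * g i = 0) :
    ∑ x : Fin N → Fin d, (∏ j, p (x j)) * (∑ j, g (x j)) ^ 2
      = N * ∑ i, p i * g i ^ 2 := by
  set V : ℝ := ∑ i, p i * g i ^ 2 with hV
  have hjk : ∀ j k : Fin N, (∑ x : Fin N → Fin d, (∏ m, p (x m)) * (g (x j) * g (x k)))
      = if j = k then V else 0 := by
    intro j k
    have hterm : ∀ x : Fin N → Fin d, (∏ m, p (x m)) * (g (x j) * g (x k))
        = ∏ m, (p (x m) * (if m = j then g (x m) else 1) * (if m = k then g (x m) else 1)) := by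
      intro x
      rw [Finset.prod_mul_distrib, Finset.prod_mul_distrib,
        Finset.prod_ite_eq' univ j (fun m => g (x m)),
        Finset.prod_ite_eq' univ k (fun m => g (x m))]
      simp [mul_assoc]
    simp only [hterm]
    rw [qh_sumfact (fun m i => p i * (if m = j then g i else 1) * (if m = k then g i else 1))]
    have hs : ∀ m : Fin N, (∑ i, p i * (if m = j then g i else 1) * (if m = k then g i else 1))
        = if m = j then (if m = k then V else 0) else (if m = k then 0 else 1) := by
      intro m
      by_cases h1 : m = j
      · by_cases h2 : m = k
        · simp only [if_pos h1, if_pos h2, hV]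
          exact Finset.sum_congr rfl fun i _ => by ring
        · simp only [if_pos h1, if_neg h2, mul_one]
          exact hg0
      · by_cases h2 : m = k
        · simp only [if_neg h1, if_pos h2, mul_one]
          exact hg0
        · simp only [if_neg h1, if_neg h2, mul_one]
          exact hp1
    simp only [hs]
    by_cases hjk : j = k
    · subst hjk
      rw [Finset.prod_eq_single j (fun m _ hm => by simp [hm]) (by simp)]
      simp
    · rw [Finset.prod_eq_zero (Finset.mem_univ j)]
      · simp [hjk]
      · simp [hjk]
  calc ∑ x : Fin N → Fin d, (∏ j, p (x j)) * (∑ j, g (x j)) ^ 2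
      = ∑ x : Fin N → Fin d, ∑ j : Fin N, ∑ k : Fin N, (∏ m, p (x m)) * (g (x j) * g (x k)) := by
        refine Finset.sum_congr rfl fun x _ => ?_
        rw [sq, Finset.sum_mul_sum, Finset.mul_sum]
        exact Finset.sum_congr rfl fun j _ => by rw [Finset.mul_sum]
      _ = ∑ j : Fin N, ∑ k : Fin N, ∑ x : Fin N → Fin d, (∏ m, p (x m)) * (g (x j) * g (x k)) := by
        rw [Finset.sum_comm]
        exact Finset.sum_congr rfl fun j _ => Finset.sum_comm
      _ = ∑ j : Fin N, ∑ k : Fin N, if j = k then V else 0 := by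
        exact Finset.sum_congr rfl fun j _ => Finset.sum_congr rfl fun k _ => hjk j k
      _ = N * V := by simp [Finset.sum_ite_eq, mul_comm]

/-- Proposition 1 of the paper: Let `ρ` be a `d × d` density matrix with
eigenvalues `p` and orthonormal eigenvectors `v`, and let `l` assign codeword lengths to
the eigenstates, with average length `L̄ = ∑ i, p i * l i`.  For every `ε > 0` and `δ > 0`
there exists `N₀` such that for all `N ≥ N₀`, the real part of `trace (ρ^⊗N * Π)` is at
least `1 - ε`, where `Π` projects onto the typical subspace spanned by tensor products of
eigenvectors whose total codeword length is at most `N * (L̄ + δ)`. -/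
theorem quantum_huffman_typical_subspace_fidelity (d : ℕ)
    (ρ : Matrix (Fin d) (Fin d) ℂ) (hρ : ρ.PosSemidef) (htr : ρ.trace = 1)
    (p : Fin d → ℝ) (v : Fin d → Fin d → ℂ)
    (hortho : ∀ i i' : Fin d, ∑ a, v i a * conj (v i' a) = if i = i' then 1 else 0)
    (hdiag : ∀ a b : Fin d, ρ a b = ∑ i, (p i : ℂ) * v i a * conj (v i b))
    (l : Fin d → ℕ) (ε δ : ℝ) (hε : 0 < ε) (hδ : 0 < δ) :
    ∃ N₀ : ℕ, ∀ N : ℕ, N₀ ≤ N →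
      1 - ε ≤
        (Matrix.trace
          ((Matrix.of fun x y : Fin N → Fin d => ∏ j, ρ (x j) (y j)) *
           (Matrix.of fun a b : Fin N → Fin d =>
              ∑ x ∈ Finset.univ.filter (fun x : Fin N → Fin d =>
                  (∑ j, (l (x j) : ℝ)) ≤ N * ((∑ i, p i * (l i : ℝ)) + δ)),
                ∏ j, v (x j) (a j) * conj (v (x j) (b j))))).re := by
  have key := qh_key ρ p v hortho hdiag
  -- eigenvalues are nonnegative and sum to 1
  have hp0 : ∀ k, 0 ≤ p k := by
    intro k
    have h := hρ.dotProduct_mulVec_nonneg (v k)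
    have heq : dotProduct (star (v k)) (ρ.mulVec (v k)) = (p k : ℂ) := by
      rw [← key k]
      simp only [dotProduct, Matrix.mulVec, Pi.star_apply, Finset.mul_sum]
      refine Finset.sum_congr rfl fun e _ => Finset.sum_congr rfl fun c _ => ?_
      simp [RCLike.star_def]
      ring
    rw [heq] at h
    exact_mod_cast Complex.zero_le_real.mp h
  have hp1 : (∑ i, p i) = 1 := by
    have : ρ.trace = ((∑ i, p i : ℝ) : ℂ) := by
      rw [Matrix.trace]
      simp only [Matrix.diag, hdiag]
      rw [Finset.sum_comm]
      push_cast
      refine Finset.sum_congr rfl fun i _ => ?_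
      rw [show (∑ a, (p i : ℂ) * v i a * conj (v i a)) = (p i : ℂ) * ∑ a, v i a * conj (v i a) by
        rw [Finset.mul_sum]; exact Finset.sum_congr rfl fun a _ => by ring]
      rw [hortho i i]
      simp
    rw [htr] at this
    exact_mod_cast this.symm
  set L : ℝ := ∑ i, p i * (l i : ℝ) with hLdef
  set g : Fin d → ℝ := fun i => (l i : ℝ) - L with hgdef
  have hg0 : ∑ i, p i * g i = 0 := by
    simp only [hgdef, mul_sub]
    rw [Finset.sum_sub_distrib, ← Finset.sum_mul, hp1]
    simp [hLdef]
  set V : ℝ := ∑ i, p i * g i ^ 2 with hVdef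
  have hV0 : 0 ≤ V :=
    Finset.sum_nonneg fun i _ => mul_nonneg (hp0 i) (sq_nonneg _)
  refine ⟨⌈V / (ε * δ ^ 2)⌉₊ + 1, fun N hN => ?_⟩
  have hN1 : 1 ≤ N := le_trans (Nat.le_add_left 1 _) hN
  have hNpos : (0 : ℝ) < N := by exact_mod_cast hN1
  have hVN : V ≤ N * ε * δ ^ 2 := by
    have h1 : V / (ε * δ ^ 2) ≤ (N : ℝ) := by
      calc V / (ε * δ ^ 2) ≤ (⌈V / (ε * δ ^ 2)⌉₊ : ℝ) := Nat.le_ceil _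
        _ ≤ (N : ℝ) := by exact_mod_cast le_trans (Nat.le_add_right _ 1) hN
    have h2 : 0 < ε * δ ^ 2 := mul_pos hε (pow_pos hδ 2)
    calc V = V / (ε * δ ^ 2) * (ε * δ ^ 2) := by field_simp
      _ ≤ N * (ε * δ ^ 2) := by
          exact mul_le_mul_of_nonneg_right h1 h2.le
      _ = N * ε * δ ^ 2 := by ring
  set T : Finset (Fin N → Fin d) := Finset.univ.filter (fun x : Fin N → Fin d =>
      (∑ j, (l (x j) : ℝ)) ≤ N * (L + δ)) with hTdef
  -- trace computation
  have htrace := qh_trace ρ p v key T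
  have htrace_re :
      (Matrix.trace
          ((Matrix.of fun x y : Fin N → Fin d => ∏ j, ρ (x j) (y j)) *
           (Matrix.of fun a b : Fin N → Fin d =>
              ∑ x ∈ T, ∏ j, v (x j) (a j) * conj (v (x j) (b j))))).re
      = ∑ x ∈ T, ∏ j, p (x j) := by
    rw [htrace]
    rw [show (∑ x ∈ T, ∏ j, (p (x j) : ℂ)) = ((∑ x ∈ T, ∏ j, p (x j) : ℝ) : ℂ) by push_cast; rfl]
    exact Complex.ofReal_re _
  rw [htrace_re]
  -- probabilistic bound
  have htot : ∑ x : Fin N → Fin d, ∏ j, p (x j) = 1 := by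
    rw [qh_sumfact (fun _ i => p i)]
    simp [hp1]
  set B : Finset (Fin N → Fin d) := Finset.univ.filter (fun x : Fin N → Fin d =>
      ¬ ((∑ j, (l (x j) : ℝ)) ≤ N * (L + δ))) with hBdef
  have hsplit : (∑ x ∈ T, ∏ j, p (x j)) + (∑ x ∈ B, ∏ j, p (x j)) = 1 := by
    rw [hTdef, hBdef, Finset.sum_filter_add_sum_filter_not, htot]
  have hprodnn : ∀ x : Fin N → Fin d, 0 ≤ ∏ j, p (x j) :=
    fun x => Finset.prod_nonneg fun j _ => hp0 (x j)
  -- on the bad set, the centered sum exceeds N δ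
  have hbad : ∀ x ∈ B, (N : ℝ) * δ ≤ ∑ j, g (x j) := by
    intro x hx
    rw [hBdef, Finset.mem_filter] at hx
    have hlt : (N : ℝ) * (L + δ) < ∑ j, (l (x j) : ℝ) := lt_of_not_ge hx.2
    have : (∑ j, g (x j)) = (∑ j, (l (x j) : ℝ)) - N * L := by
      simp [hgdef, Finset.sum_sub_distrib, Finset.card_univ, mul_comm]
    rw [this]
    nlinarith
  -- Chebyshev
  have hmom := qh_moment2 (N := N) p g hp1 hg0
  have hcheb : (∑ x ∈ B, ∏ j, p (x j)) * ((N : ℝ) * δ) ^ 2 ≤ N * V := by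
    calc (∑ x ∈ B, ∏ j, p (x j)) * ((N : ℝ) * δ) ^ 2
        = ∑ x ∈ B, (∏ j, p (x j)) * ((N : ℝ) * δ) ^ 2 := by rw [Finset.sum_mul]
      _ ≤ ∑ x ∈ B, (∏ j, p (x j)) * (∑ j, g (x j)) ^ 2 := by
          refine Finset.sum_le_sum fun x hx => ?_
          refine mul_le_mul_of_nonneg_left ?_ (hprodnn x)
          exact pow_le_pow_left₀ (by positivity) (hbad x hx) 2
      _ ≤ ∑ x : Fin N → Fin d, (∏ j, p (x j)) * (∑ j, g (x j)) ^ 2 := by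
          refine Finset.sum_le_sum_of_subset_of_nonneg (Finset.subset_univ B) ?_
          intro x _ _
          exact mul_nonneg (hprodnn x) (sq_nonneg _)
      _ = N * V := hmom
  have hBle : (∑ x ∈ B, ∏ j, p (x j)) ≤ ε := by
    have hpos : (0 : ℝ) < ((N : ℝ) * δ) ^ 2 := by positivity
    rw [← mul_le_mul_iff_of_pos_right hpos]
    calc (∑ x ∈ B, ∏ j, p (x j)) * ((N : ℝ) * δ) ^ 2 ≤ N * V := hcheb
      _ ≤ N * (N * ε * δ ^ 2) := by
          exact mul_le_mul_of_nonneg_left hVN (le_of_lt hNpos)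
      _ = ε * ((N : ℝ) * δ) ^ 2 := by ring
  linarith [hsplit, hBle]
end

section
/- Let a b : ℂ with ‖a‖^2 + ‖b‖^2 = 1, and let m : ℕ. For x : Fin (m+1) → Bool let z x denote the number of indices j with x j = false, and define the entangled encoder-plus-record state ψ : (Fin (m+1) → Bool) → Fin (m+2) → ℂ by ψ x k = if (k : ℕ) = z x then a ^ (z x) * b ^ (m + 1 − z x) else 0. Define the reduced density matrix of the first signal ρ₁ : Bool → Bool → ℂ by ρ₁ i j = ∑ over g : Fin m → Bool and k : Fin (m+2) of ψ (Fin.cons i g) k * conj (ψ (Fin.cons j g) k). Then ρ₁ false false = ‖a‖^2, ρ₁ true true = ‖b‖^2, ρ₁ false true = 0 and ρ₁ true false = 0; consequently the fidelity of the first signal with the input state a|0⟩ + b|1⟩, namely the real part of conj a * ρ₁ false false * a + conj a * ρ₁ false true * b + conj b * ρ₁ true false * a + conj b * ρ₁ true true * b, equals ‖a‖^4 + ‖b‖^4, which is strictly less than 1 whenever a ≠ 0 and b ≠ 0. -/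
open scoped ComplexConjugate

/-- The number of indices `j` with `x j = false` (the number of zeroes of the record). -/
def numZeroes {m : ℕ} (x : Fin (m + 1) → Bool) : ℕ :=
  (Finset.univ.filter fun j => x j = false).card

/-- The entangled encoder-plus-record state for `m + 1` copies of `a|0⟩ + b|1⟩`, where the
encoder head records the total number of zeroes. -/
noncomputable def encoderState (a b : ℂ) (m : ℕ)
    (x : Fin (m + 1) → Bool) (k : Fin (m + 2)) : ℂ :=
  if (k : ℕ) = numZeroes x then a ^ numZeroes x * b ^ (m + 1 - numZeroes x) else 0

/-- The reduced density matrix of the first signal, obtained by tracing out the remaining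
`m` signals and the record register. -/
noncomputable def firstSignalState (a b : ℂ) (m : ℕ) (i j : Bool) : ℂ :=
  ∑ g : Fin m → Bool, ∑ k : Fin (m + 2),
    encoderState a b m (Fin.cons i g) k * conj (encoderState a b m (Fin.cons j g) k)

def zc {m : ℕ} (g : Fin m → Bool) : ℕ :=
  (Finset.univ.filter fun j => g j = false).card

lemma zc_le {m : ℕ} (g : Fin m → Bool) : zc g ≤ m := by
  simpa [zc] using Finset.card_filter_le Finset.univ (fun j => g j = false)

lemma numZeroes_eq_zc {m : ℕ} (x : Fin (m + 1) → Bool) : numZeroes x = zc x := rfl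

lemma zc_cons {m : ℕ} (i : Bool) (g : Fin m → Bool) :
    zc (Fin.cons i g) = (cond i 0 1) + zc g := by
  unfold zc
  rw [Finset.card_filter, Finset.card_filter, Fin.sum_univ_succ]
  cases i <;> simp

lemma key_sum (α β : ℂ) (m : ℕ) :
    ∑ g : Fin m → Bool, α ^ zc g * β ^ (m - zc g) = (α + β) ^ m := by
  induction m with
  | zero => simp [zc]
  | succ m ih =>
      have he := Fintype.sum_equiv (Fin.consEquiv fun _ : Fin (m + 1) => Bool)
        (fun p : Bool × (Fin m → Bool) =>
          α ^ zc (Fin.cons p.1 p.2) * β ^ (m + 1 - zc (Fin.cons p.1 p.2)))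
        (fun g => α ^ zc g * β ^ (m + 1 - zc g)) (fun p => rfl)
      rw [← he, Fintype.sum_prod_type, Fintype.sum_bool]
      have h : ∀ g : Fin m → Bool,
          α ^ zc (Fin.cons true g) * β ^ (m + 1 - zc (Fin.cons true g)) +
          α ^ zc (Fin.cons false g) * β ^ (m + 1 - zc (Fin.cons false g)) =
          (α + β) * (α ^ zc g * β ^ (m - zc g)) := by
        intro g
        have hle := zc_le g
        rw [zc_cons, zc_cons]
        simp only [Bool.cond_true, Bool.cond_false, Nat.zero_add]
        rw [show m + 1 - zc g = (m - zc g) + 1 from by omega,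
            show m + 1 - (1 + zc g) = m - zc g from by omega,
            show 1 + zc g = zc g + 1 from by omega, pow_succ, pow_succ]
        ring
      rw [← Finset.sum_add_distrib]
      rw [Finset.sum_congr rfl fun g _ => h g, ← Finset.mul_sum, ih, ← pow_succ']

lemma sum_k (a b : ℂ) (m : ℕ) (x : Fin (m + 1) → Bool) :
    ∑ k : Fin (m + 2), encoderState a b m x k * conj (encoderState a b m x k) =
      ((‖a‖ ^ 2 : ℝ) : ℂ) ^ numZeroes x * ((‖b‖ ^ 2 : ℝ) : ℂ) ^ (m + 1 - numZeroes x) := by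
  have hz : numZeroes x ≤ m + 1 := zc_le x
  set v : ℂ := (a ^ numZeroes x * b ^ (m + 1 - numZeroes x)) *
      conj (a ^ numZeroes x * b ^ (m + 1 - numZeroes x)) with hv
  have hterm : ∀ k : Fin (m + 2),
      encoderState a b m x k * conj (encoderState a b m x k) =
        if (k : ℕ) = numZeroes x then v else 0 := by
    intro k; unfold encoderState; split <;> simp [hv]
  have hsum : ∑ k : Fin (m + 2), encoderState a b m x k * conj (encoderState a b m x k) = v := by
    rw [Finset.sum_congr rfl fun k _ => hterm k,
      Fin.sum_univ_eq_sum_range (fun k => if k = numZeroes x then v else 0),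
      Finset.sum_ite_eq' (Finset.range (m + 2)) (numZeroes x) (fun _ => v),
      if_pos (Finset.mem_range.mpr (by omega))]
  rw [hsum, hv]
  have : (a ^ numZeroes x * b ^ (m + 1 - numZeroes x)) *
      conj (a ^ numZeroes x * b ^ (m + 1 - numZeroes x)) =
      (a * conj a) ^ numZeroes x * (b * conj b) ^ (m + 1 - numZeroes x) := by
    rw [map_mul, map_pow, map_pow]; ring
  rw [this, Complex.mul_conj, Complex.mul_conj, Complex.normSq_eq_norm_sq, Complex.normSq_eq_norm_sq]

/-- If the encoder keeps a record of the total number of zeroes of `m + 1`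
copies of the state `a|0⟩ + b|1⟩`, the reduced state of the first signal becomes diagonal
(`ρ₁ false false = ‖a‖²`, `ρ₁ true true = ‖b‖²`, off-diagonal terms vanish), and its
fidelity with the input state equals `‖a‖⁴ + ‖b‖⁴`, which is strictly less than 1
whenever `a ≠ 0` and `b ≠ 0`. -/
theorem record_of_zeroes_decoheres (a b : ℂ) (hab : ‖a‖ ^ 2 + ‖b‖ ^ 2 = 1) (m : ℕ) :
    firstSignalState a b m false false = ((‖a‖ ^ 2 : ℝ) : ℂ) ∧
    firstSignalState a b m true true = ((‖b‖ ^ 2 : ℝ) : ℂ) ∧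
    firstSignalState a b m false true = 0 ∧
    firstSignalState a b m true false = 0 ∧
    (conj a * firstSignalState a b m false false * a +
     conj a * firstSignalState a b m false true * b +
     conj b * firstSignalState a b m true false * a +
     conj b * firstSignalState a b m true true * b).re = ‖a‖ ^ 4 + ‖b‖ ^ 4 ∧
    (a ≠ 0 → b ≠ 0 → ‖a‖ ^ 4 + ‖b‖ ^ 4 < 1) := by
  set α : ℂ := ((‖a‖ ^ 2 : ℝ) : ℂ) with hα
  set β : ℂ := ((‖b‖ ^ 2 : ℝ) : ℂ) with hβ
  have habC : α + β = 1 := by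
    rw [hα, hβ]; push_cast; exact_mod_cast congrArg (Complex.ofReal) hab
  -- diagonal entries
  have hff : firstSignalState a b m false false = α := by
    unfold firstSignalState
    have : ∀ g : Fin m → Bool, (∑ k : Fin (m + 2),
        encoderState a b m (Fin.cons false g) k * conj (encoderState a b m (Fin.cons false g) k)) =
        α * (α ^ zc g * β ^ (m - zc g)) := by
      intro g
      rw [sum_k, numZeroes_eq_zc, zc_cons]
      have hle := zc_le g
      simp only [Bool.cond_false]
      rw [show m + 1 - (1 + zc g) = m - zc g from by omega,
          show 1 + zc g = zc g + 1 from by omega, pow_succ]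
      ring
    rw [Finset.sum_congr rfl fun g _ => this g, ← Finset.mul_sum, key_sum, habC, one_pow, mul_one]
  have htt : firstSignalState a b m true true = β := by
    unfold firstSignalState
    have : ∀ g : Fin m → Bool, (∑ k : Fin (m + 2),
        encoderState a b m (Fin.cons true g) k * conj (encoderState a b m (Fin.cons true g) k)) =
        β * (α ^ zc g * β ^ (m - zc g)) := by
      intro g
      rw [sum_k, numZeroes_eq_zc, zc_cons]
      have hle := zc_le g
      simp only [Bool.cond_true, Nat.zero_add]
      rw [show m + 1 - zc g = (m - zc g) + 1 from by omega, pow_succ]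
      rw [hα, hβ]; ring
    rw [Finset.sum_congr rfl fun g _ => this g, ← Finset.mul_sum, key_sum, habC, one_pow, mul_one]
  -- off-diagonal entries
  have hne : ∀ (i j : Bool), i ≠ j → firstSignalState a b m i j = 0 := by
    intro i j hij
    unfold firstSignalState
    apply Finset.sum_eq_zero
    intro g _
    apply Finset.sum_eq_zero
    intro k _
    have hzz : numZeroes (Fin.cons i g) ≠ numZeroes (Fin.cons j g) := by
      rw [numZeroes_eq_zc, numZeroes_eq_zc, zc_cons, zc_cons]
      cases i <;> cases j <;> simp_all
    unfold encoderState
    by_cases h : (k : ℕ) = numZeroes (Fin.cons i g)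
    · have h2 : ¬ ((k : ℕ) = numZeroes (Fin.cons j g)) := fun h2 => hzz (h ▸ h2 ▸ rfl)
      rw [if_neg h2, map_zero, mul_zero]
    · rw [if_neg h, zero_mul]
  have hft := hne false true (by simp)
  have htf := hne true false (by simp)
  refine ⟨hff, htt, hft, htf, ?_, ?_⟩
  · rw [hff, htt, hft, htf]
    have h1 : conj a * α * a + conj a * 0 * b + conj b * 0 * a + conj b * β * b =
        α * (a * conj a) + β * (b * conj b) := by ring
    have h2 : α * ↑(Complex.normSq a) + β * ↑(Complex.normSq b) =
        (((‖a‖ ^ 4 + ‖b‖ ^ 4 : ℝ)) : ℂ) := by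
      rw [hα, hβ, Complex.normSq_eq_norm_sq, Complex.normSq_eq_norm_sq]
      push_cast
      ring
    rw [h1, Complex.mul_conj, Complex.mul_conj, h2, Complex.ofReal_re]
  · intro ha hb
    have ha' : 0 < ‖a‖ := norm_pos_iff.mpr ha
    have hb' : 0 < ‖b‖ := norm_pos_iff.mpr hb
    nlinarith [sq_nonneg (‖a‖ * ‖b‖), mul_pos ha' hb']
end
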